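/- If n ≥ 3 and 1 ≤ k ≤ n-1, then every maximizer d of the sequence d ↦ C(k,d)·C(n-k,d) over {0,...,min(k,n-k)} satisfies d* ≤ d ≤ d* + 1, where d* = (k(n-k)-1)/(n+2) as a rational number. -/
import Mathlib


set_option maxHeartbeats 2000000 in
theorem maximizer_location (n k : ℕ) (hn : 3 ≤ n) (hk1 : 1 ≤ k) (hk2 : k ≤ n - 1)
    (d : ℕ) (hd : d ≤ min k (n - k))
    (hmax : ∀ e ≤ min k (n - k),
      Nat.choose k e * Nat.choose (n - k) e ≤ Nat.choose k d * Nat.choose (n - k) d) :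
    ((k : ℚ) * ((n : ℚ) - k) - 1) / ((n : ℚ) + 2) ≤ (d : ℚ)
      ∧ (d : ℚ) ≤ ((k : ℚ) * ((n : ℚ) - k) - 1) / ((n : ℚ) + 2) + 1 := by
  have hkn : k ≤ n := by omega
  obtain ⟨b, hbdef⟩ : ∃ b, n - k = b := ⟨_, rfl⟩
  rw [hbdef] at hd hmax
  have hb1 : 1 ≤ b := by omega
  have hkb : k + b = n := by omega
  have hdk : d ≤ k := le_trans hd (min_le_left _ _)
  have hdb : d ≤ b := le_trans hd (min_le_right _ _)
  have hfpos : 0 < Nat.choose k d * Nat.choose b d :=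
    Nat.mul_pos (Nat.choose_pos hdk) (Nat.choose_pos hdb)
  have hbn : b ≤ n := by omega
  -- Lower bound in ℕ : k*b ≤ d*(n+2)+1
  have hL : k * b ≤ d * (n + 2) + 1 := by
    by_contra hcon
    push_neg at hcon
    have hdk' : d < k := by
      rcases Nat.lt_or_ge d k with h' | h'
      · exact h'
      · have hdk2 : d = k := le_antisymm hdk h'
        rw [← hdk2] at hcon
        nlinarith [Nat.mul_le_mul_left d hbn]
    have hdb' : d < b := by
      rcases Nat.lt_or_ge d b with h' | h'
      · exact h'
      · have hdb2 : d = b := le_antisymm hdb h'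
        rw [← hdb2] at hcon
        nlinarith [Nat.mul_le_mul_left d hkn]
    have hstep := hmax (d + 1) (le_min hdk' hdb')
    have h1 := Nat.choose_succ_right_eq k d
    have h2 := Nat.choose_succ_right_eq b d
    have hid : (Nat.choose k (d+1) * Nat.choose b (d+1)) * ((d+1)*(d+1))
        = (Nat.choose k d * Nat.choose b d) * ((k-d)*(b-d)) := by
      calc (Nat.choose k (d+1) * Nat.choose b (d+1)) * ((d+1)*(d+1))
          = (Nat.choose k (d+1) * (d+1)) * (Nat.choose b (d+1) * (d+1)) := by ring
        _ = (Nat.choose k d * (k-d)) * (Nat.choose b d * (b-d)) := by rw [h1, h2]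
        _ = (Nat.choose k d * Nat.choose b d) * ((k-d)*(b-d)) := by ring
    have hkey : (d+1)*(d+1) + 1 ≤ (k-d)*(b-d) := by
      obtain ⟨u, rfl⟩ : ∃ u, k = d + u := ⟨k - d, by omega⟩
      obtain ⟨v, rfl⟩ : ∃ v, b = d + v := ⟨b - d, by omega⟩
      have hu : d + u - d = u := by omega
      have hv : d + v - d = v := by omega
      rw [hu, hv]
      subst hkb
      nlinarith [hcon]
    have chain : (Nat.choose k d * Nat.choose b d) * ((d+1)*(d+1))
        + (Nat.choose k d * Nat.choose b d)
        ≤ (Nat.choose k d * Nat.choose b d) * ((d+1)*(d+1)) := by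
      calc (Nat.choose k d * Nat.choose b d) * ((d+1)*(d+1))
            + (Nat.choose k d * Nat.choose b d)
          = (Nat.choose k d * Nat.choose b d) * ((d+1)*(d+1) + 1) := by ring
        _ ≤ (Nat.choose k d * Nat.choose b d) * ((k-d)*(b-d)) :=
            Nat.mul_le_mul_left _ hkey
        _ = (Nat.choose k (d+1) * Nat.choose b (d+1)) * ((d+1)*(d+1)) := hid.symm
        _ ≤ (Nat.choose k d * Nat.choose b d) * ((d+1)*(d+1)) :=
            Nat.mul_le_mul_right _ hstep
    have chain' : (Nat.choose k d * Nat.choose b d) * ((d+1)*(d+1))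
        + (Nat.choose k d * Nat.choose b d)
        ≤ (Nat.choose k d * Nat.choose b d) * ((d+1)*(d+1)) + 0 := by
      rw [Nat.add_zero]; exact chain
    have hF0 : Nat.choose k d * Nat.choose b d ≤ 0 :=
      Nat.le_of_add_le_add_left chain'
    omega
  -- Upper bound in ℕ : d*(n+2) ≤ k*b + n + 1
  have hU : d * (n + 2) ≤ k * b + n + 1 := by
    by_contra hcon
    push_neg at hcon
    have hd1 : 1 ≤ d := by
      rcases Nat.eq_zero_or_pos d with h | h
      · subst h; simp at hcon
      · exact h
    obtain ⟨e, rfl⟩ : ∃ e, d = e + 1 := ⟨d - 1, by omega⟩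
    have hstep := hmax e (le_trans (by omega) hd)
    have h1 := Nat.choose_succ_right_eq k e
    have h2 := Nat.choose_succ_right_eq b e
    have hid : (Nat.choose k (e+1) * Nat.choose b (e+1)) * ((e+1)*(e+1))
        = (Nat.choose k e * Nat.choose b e) * ((k-e)*(b-e)) := by
      calc (Nat.choose k (e+1) * Nat.choose b (e+1)) * ((e+1)*(e+1))
          = (Nat.choose k (e+1) * (e+1)) * (Nat.choose b (e+1) * (e+1)) := by ring
        _ = (Nat.choose k e * (k-e)) * (Nat.choose b e * (b-e)) := by rw [h1, h2]
        _ = (Nat.choose k e * Nat.choose b e) * ((k-e)*(b-e)) := by ring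
    have hkey : (k-e)*(b-e) + 1 ≤ (e+1)*(e+1) := by
      obtain ⟨u, rfl⟩ : ∃ u, k = e + u := ⟨k - e, by omega⟩
      obtain ⟨v, rfl⟩ : ∃ v, b = e + v := ⟨b - e, by omega⟩
      have hu : e + u - e = u := by omega
      have hv : e + v - e = v := by omega
      rw [hu, hv]
      subst hkb
      nlinarith [hcon]
    have chain : (Nat.choose k (e+1) * Nat.choose b (e+1)) * ((k-e)*(b-e))
        + (Nat.choose k (e+1) * Nat.choose b (e+1))
        ≤ (Nat.choose k (e+1) * Nat.choose b (e+1)) * ((k-e)*(b-e)) := by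
      calc (Nat.choose k (e+1) * Nat.choose b (e+1)) * ((k-e)*(b-e))
            + (Nat.choose k (e+1) * Nat.choose b (e+1))
          = (Nat.choose k (e+1) * Nat.choose b (e+1)) * ((k-e)*(b-e) + 1) := by ring
        _ ≤ (Nat.choose k (e+1) * Nat.choose b (e+1)) * ((e+1)*(e+1)) :=
            Nat.mul_le_mul_left _ hkey
        _ = (Nat.choose k e * Nat.choose b e) * ((k-e)*(b-e)) := hid
        _ ≤ (Nat.choose k (e+1) * Nat.choose b (e+1)) * ((k-e)*(b-e)) :=
            Nat.mul_le_mul_right _ hstep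
    have chain' : (Nat.choose k (e+1) * Nat.choose b (e+1)) * ((k-e)*(b-e))
        + (Nat.choose k (e+1) * Nat.choose b (e+1))
        ≤ (Nat.choose k (e+1) * Nat.choose b (e+1)) * ((k-e)*(b-e)) + 0 := by
      rw [Nat.add_zero]; exact chain
    have hF0 : Nat.choose k (e+1) * Nat.choose b (e+1) ≤ 0 :=
      Nat.le_of_add_le_add_left chain'
    omega
  -- Translate to ℚ
  have hnQ : (0:ℚ) < (n:ℚ) + 2 := by positivity
  have hbQ : ((n:ℚ) - (k:ℚ)) = (b:ℚ) := by
    rw [← hbdef]; exact (Nat.cast_sub hkn).symm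
  rw [hbQ]
  constructor
  · rw [div_le_iff₀ hnQ]
    have h : ((k * b : ℕ):ℚ) ≤ ((d * (n + 2) + 1 : ℕ):ℚ) := Nat.cast_le.mpr hL
    push_cast at h
    linarith
  · rw [div_add' _ _ _ (ne_of_gt hnQ), le_div_iff₀ hnQ]
    have h : ((d * (n + 2) : ℕ):ℚ) ≤ ((k * b + n + 1 : ℕ):ℚ) := Nat.cast_le.mpr hU
    push_cast at h
    linarith
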